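/- Divisibility for low degree families of m-sets: if Y is a family of m-subsets of [n] whose characteristic function has degree at most d, then gcd(C(n,m), C(n-1,m-1), ..., C(n-d,m-d)) divides |Y|. -/

import Mathlib

open Finset

variable {ι : Type*} [DecidableEq ι]

/-- Alternating sum over a powerset, in any commutative ring. -/
lemma sum_powerset_neg_one_pow_card_ring {R : Type*} [CommRing R] (s : Finset ι) :
    ∑ B ∈ s.powerset, (-1 : R) ^ B.card = if s = ∅ then 1 else 0 := by
  have h := Finset.prod_add (fun _ : ι => (-1 : R)) (fun _ : ι => (1 : R)) s
  simp only [neg_add_cancel, Finset.prod_const, Finset.prod_const_one, mul_one] at h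
  rw [zero_pow_eq] at h
  simp only [Finset.card_eq_zero] at h
  simp only [one_pow, mul_one] at h
  exact h.symm

/-- The number of `k`-subsets of `W` containing a fixed subset `A`. -/
lemma card_supersets {A W : Finset ι} {k : ℕ} (hAW : A ⊆ W) (hk : A.card ≤ k) :
    ((W.powersetCard k).filter (fun E => A ⊆ E)).card
      = (W.card - A.card).choose (k - A.card) := by
  have h : ((W.powersetCard k).filter (fun E => A ⊆ E)).card
      = ((W \ A).powersetCard (k - A.card)).card := by
    apply Finset.card_nbij' (i := fun E => E \ A) (j := fun F => F ∪ A)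
    · intro E hE
      obtain ⟨hEmem, hAE⟩ := Finset.mem_filter.mp hE
      obtain ⟨hEW, hEc⟩ := Finset.mem_powersetCard.mp hEmem
      refine Finset.mem_powersetCard.mpr ⟨Finset.sdiff_subset_sdiff hEW (le_refl _), ?_⟩
      rw [Finset.card_sdiff_of_subset hAE, hEc]
    · intro F hF
      obtain ⟨hFW, hFc⟩ := Finset.mem_powersetCard.mp hF
      have hdisj : Disjoint F A := Finset.disjoint_of_subset_left hFW Finset.sdiff_disjoint
      refine Finset.mem_filter.mpr ⟨Finset.mem_powersetCard.mpr ⟨?_, ?_⟩, Finset.subset_union_right⟩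
      · exact Finset.union_subset (hFW.trans (Finset.sdiff_subset)) hAW
      · rw [Finset.card_union_of_disjoint hdisj, hFc, Nat.sub_add_cancel hk]
    · intro E hE
      obtain ⟨_, hAE⟩ := Finset.mem_filter.mp hE
      exact Finset.sdiff_union_of_subset hAE
    · intro F hF
      obtain ⟨hFW, _⟩ := Finset.mem_powersetCard.mp hF
      have hdisj : Disjoint F A := Finset.disjoint_of_subset_left hFW Finset.sdiff_disjoint
      dsimp only
      rw [Finset.union_sdiff_distrib, Finset.sdiff_self, Finset.union_empty,
        Finset.sdiff_eq_self_of_disjoint hdisj]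
  rw [h, Finset.card_powersetCard, Finset.card_sdiff_of_subset hAW]

/-- Summing the `k`-set degrees over all `d`-supersets of `T`. -/
lemma sum_deg {R : Type*} [CommRing R] (V T : Finset ι) (k d : ℕ) (w : Finset ι → R)
    (hTV : T ⊆ V) (hTd : T.card ≤ d) :
    ∑ D ∈ (V.powersetCard d).filter (fun D => T ⊆ D),
        ∑ S ∈ (V.powersetCard k).filter (fun S => D ⊆ S), w S
      = ((k - T.card).choose (d - T.card) : R) *
        ∑ S ∈ (V.powersetCard k).filter (fun S => T ⊆ S), w S := by
  have step : ∀ S ∈ V.powersetCard k,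
      (∑ D ∈ (V.powersetCard d).filter (fun D => T ⊆ D), if D ⊆ S then w S else 0)
        = if T ⊆ S then ((k - T.card).choose (d - T.card) : R) * w S else 0 := by
    intro S hS
    obtain ⟨hSV, hSc⟩ := Finset.mem_powersetCard.mp hS
    rw [← Finset.sum_filter, Finset.filter_filter, Finset.sum_const]
    by_cases hTS : T ⊆ S
    · have hfe : (V.powersetCard d).filter (fun D => T ⊆ D ∧ D ⊆ S)
          = (S.powersetCard d).filter (fun D => T ⊆ D) := by
        ext D
        simp only [Finset.mem_filter, Finset.mem_powersetCard]
        constructor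
        · rintro ⟨⟨_, hc⟩, h1, h2⟩; exact ⟨⟨h2, hc⟩, h1⟩
        · rintro ⟨⟨h2, hc⟩, h1⟩; exact ⟨⟨h2.trans hSV, hc⟩, h1, h2.trans (le_refl S)⟩
      rw [hfe, card_supersets hTS hTd, hSc, if_pos hTS, nsmul_eq_mul]
    · have hfe : (V.powersetCard d).filter (fun D => T ⊆ D ∧ D ⊆ S) = ∅ := by
        apply Finset.filter_false_of_mem
        rintro D _ ⟨h1, h2⟩
        exact hTS (h1.trans h2)
      rw [hfe, if_neg hTS]
      simp
  calc ∑ D ∈ (V.powersetCard d).filter (fun D => T ⊆ D),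
        ∑ S ∈ (V.powersetCard k).filter (fun S => D ⊆ S), w S
      = ∑ D ∈ (V.powersetCard d).filter (fun D => T ⊆ D),
        ∑ S ∈ V.powersetCard k, if D ⊆ S then w S else 0 := by
        apply Finset.sum_congr rfl; intro D _; rw [Finset.sum_filter]
    _ = ∑ S ∈ V.powersetCard k,
        ∑ D ∈ (V.powersetCard d).filter (fun D => T ⊆ D), if D ⊆ S then w S else 0 :=
        Finset.sum_comm
    _ = ∑ S ∈ V.powersetCard k,
        if T ⊆ S then ((k - T.card).choose (d - T.card) : R) * w S else 0 :=
        Finset.sum_congr rfl step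
    _ = ∑ S ∈ (V.powersetCard k).filter (fun S => T ⊆ S),
        ((k - T.card).choose (d - T.card) : R) * w S := (Finset.sum_filter _ _).symm
    _ = _ := by rw [← Finset.mul_sum]

/-- Möbius-type recovery of a top coefficient from low-order degrees. -/
lemma moebius_recover {R : Type*} [CommRing R] (V S₀ : Finset ι) (m : ℕ) (w : Finset ι → R)
    (hS₀ : S₀ ∈ V.powersetCard m) :
    ∑ B ∈ (V \ S₀).powerset, (-1 : R) ^ B.card *
        (∑ S ∈ (V.powersetCard m).filter (fun S => B ⊆ S), w S) = w S₀ := by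
  obtain ⟨hS₀V, hS₀c⟩ := Finset.mem_powersetCard.mp hS₀
  have key : ∀ S ∈ V.powersetCard m,
      (∑ B ∈ (V \ S₀).powerset, (-1 : R) ^ B.card * (if B ⊆ S then w S else 0))
        = if S = S₀ then w S else 0 := by
    intro S hS
    obtain ⟨hSV, hSc⟩ := Finset.mem_powersetCard.mp hS
    have h1 : ∀ B : Finset ι, (-1 : R) ^ B.card * (if B ⊆ S then w S else 0)
        = (if B ⊆ S then (-1 : R) ^ B.card else 0) * w S := by
      intro B; split <;> ring
    rw [Finset.sum_congr rfl (fun B _ => h1 B), ← Finset.sum_mul, ← Finset.sum_filter]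
    have hfilt : ((V \ S₀).powerset.filter (fun B => B ⊆ S)) = ((V \ S₀) ∩ S).powerset := by
      ext B
      simp only [Finset.mem_filter, Finset.mem_powerset, Finset.subset_inter_iff]
    rw [hfilt, sum_powerset_neg_one_pow_card_ring]
    by_cases hcase : S = S₀
    · subst hcase
      rw [if_pos rfl, if_pos (show V \ S ∩ S = ∅ by simp)]
      ring
    · have hne : (V \ S₀) ∩ S ≠ ∅ := by
        intro hempty
        apply hcase
        apply Finset.eq_of_subset_of_card_le _ (le_of_eq (hS₀c.trans hSc.symm))
        intro a haS
        by_contra haS₀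
        have : a ∈ (V \ S₀) ∩ S :=
          Finset.mem_inter.mpr ⟨Finset.mem_sdiff.mpr ⟨hSV haS, haS₀⟩, haS⟩
        rw [hempty] at this
        exact absurd this (Finset.notMem_empty a)
      rw [if_neg hne, if_neg hcase]
      ring
  calc ∑ B ∈ (V \ S₀).powerset, (-1 : R) ^ B.card *
        (∑ S ∈ (V.powersetCard m).filter (fun S => B ⊆ S), w S)
      = ∑ B ∈ (V \ S₀).powerset,
        ∑ S ∈ V.powersetCard m, (-1 : R) ^ B.card * (if B ⊆ S then w S else 0) := by
        apply Finset.sum_congr rfl; intro B _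
        rw [Finset.sum_filter, Finset.mul_sum]
    _ = ∑ S ∈ V.powersetCard m,
        ∑ B ∈ (V \ S₀).powerset, (-1 : R) ^ B.card * (if B ⊆ S then w S else 0) :=
        Finset.sum_comm
    _ = ∑ S ∈ V.powersetCard m, if S = S₀ then w S else 0 := Finset.sum_congr rfl key
    _ = w S₀ := by rw [Finset.sum_ite_eq' (V.powersetCard m) S₀ w, if_pos hS₀]

/-- Reindexing sums over sets containing a distinguished element. -/
lemma sum_insert_reindex {R : Type*} [CommRing R] {V : Finset ι} {x : ι} (hx : x ∈ V)
    {k : ℕ} (hk : 1 ≤ k) {T : Finset ι} (hT : x ∉ T) (F : Finset ι → R) :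
    ∑ D ∈ (V.powersetCard k).filter (fun D => insert x T ⊆ D), F D
      = ∑ D' ∈ ((V.erase x).powersetCard (k - 1)).filter (fun D' => T ⊆ D'), F (insert x D') := by
  apply Finset.sum_nbij' (i := fun D => D.erase x) (j := fun D' => insert x D')
  · intro D hD
    obtain ⟨hDmem, hxTD⟩ := Finset.mem_filter.mp hD
    obtain ⟨hDV, hDc⟩ := Finset.mem_powersetCard.mp hDmem
    have hxD : x ∈ D := hxTD (Finset.mem_insert_self x T)
    refine Finset.mem_filter.mpr ⟨Finset.mem_powersetCard.mpr ⟨?_, ?_⟩, ?_⟩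
    · exact Finset.erase_subset_erase x hDV
    · rw [Finset.card_erase_of_mem hxD, hDc]
    · rw [Finset.subset_erase]
      exact ⟨(Finset.subset_insert x T).trans hxTD, hT⟩
  · intro D' hD'
    obtain ⟨hD'mem, hTD'⟩ := Finset.mem_filter.mp hD'
    obtain ⟨hD'V, hD'c⟩ := Finset.mem_powersetCard.mp hD'mem
    have hxD' : x ∉ D' := fun hmem => (Finset.mem_erase.mp (hD'V hmem)).1 rfl
    refine Finset.mem_filter.mpr ⟨Finset.mem_powersetCard.mpr ⟨?_, ?_⟩, ?_⟩
    · exact Finset.insert_subset hx (hD'V.trans (Finset.erase_subset x V))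
    · rw [Finset.card_insert_of_notMem hxD', hD'c]
      omega
    · exact Finset.insert_subset_insert x hTD'
  · intro D hD
    obtain ⟨_, hxTD⟩ := Finset.mem_filter.mp hD
    exact Finset.insert_erase (hxTD (Finset.mem_insert_self x T))
  · intro D' hD'
    obtain ⟨hD'mem, _⟩ := Finset.mem_filter.mp hD'
    obtain ⟨hD'V, _⟩ := Finset.mem_powersetCard.mp hD'mem
    exact Finset.erase_insert (fun hmem => (Finset.mem_erase.mp (hD'V hmem)).1 rfl)
  · intro D hD
    obtain ⟨_, hxTD⟩ := Finset.mem_filter.mp hD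
    rw [Finset.insert_erase (hxTD (Finset.mem_insert_self x T))]

/-- Sets in a powersetCard avoiding `x` form the powersetCard of `V.erase x`. -/
lemma filter_not_mem_powersetCard (V : Finset ι) (x : ι) (k : ℕ)
    (P : Finset ι → Prop) [DecidablePred P] :
    (V.powersetCard k).filter (fun D => P D ∧ x ∉ D)
      = ((V.erase x).powersetCard k).filter P := by
  ext D
  simp only [Finset.mem_filter, Finset.mem_powersetCard, Finset.subset_erase]
  tauto

lemma sum_split_mem {R : Type*} [CommRing R] (s : Finset (Finset ι)) (x : ι)
    (P : Finset ι → Prop) [DecidablePred P] (F : Finset ι → R) :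
    ∑ S ∈ s.filter P, F S
      = (∑ S ∈ s.filter (fun S => P S ∧ x ∈ S), F S)
        + ∑ S ∈ s.filter (fun S => P S ∧ x ∉ S), F S := by
  rw [← Finset.sum_filter_add_sum_filter_not (s.filter P) (fun S => x ∈ S),
    Finset.filter_filter, Finset.filter_filter]

/-- Base case of the Graver–Jurkat type theorem: tight ground set, `#V = m + d`. -/
lemma GJbase (V : Finset ι) (m d : ℕ) (hdm : d ≤ m) (hV : V.card = m + d)
    (φ : Finset ι → ℤ)
    (hcond : ∀ T : Finset ι, T ⊆ V → T.card ≤ d →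
      (((m - T.card).choose (d - T.card) : ℤ)) ∣
        ∑ D ∈ (V.powersetCard d).filter (fun D => T ⊆ D), φ D) :
    ∃ w : Finset ι → ℤ, ∀ D ∈ V.powersetCard d,
      (∑ S ∈ (V.powersetCard m).filter (fun S => D ⊆ S), w S) = φ D := by
  classical
  -- the ℚ-linear "degree" map
  let ext : ({S // S ∈ V.powersetCard m} → ℚ) → Finset ι → ℚ :=
    fun u S => if h : S ∈ V.powersetCard m then u ⟨S, h⟩ else 0
  let Zl : ({S // S ∈ V.powersetCard m} → ℚ) →ₗ[ℚ] ({D // D ∈ V.powersetCard d} → ℚ) :=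
    { toFun := fun u D => ∑ S ∈ (V.powersetCard m).attach.filter (fun S => D.1 ⊆ S.1), u S
      map_add' := by intro u v; funext D; exact Finset.sum_add_distrib
      map_smul' := by intro a u; funext D; simp [Finset.mul_sum] }
  have hconv : ∀ (u : {S // S ∈ V.powersetCard m} → ℚ) (T : Finset ι),
      (∑ S ∈ (V.powersetCard m).attach.filter (fun S => T ⊆ S.1), u S)
        = ∑ S ∈ (V.powersetCard m).filter (fun S => T ⊆ S), ext u S := by
    intro u T
    rw [Finset.sum_filter, Finset.sum_filter,
      ← Finset.sum_attach (V.powersetCard m) (fun S => if T ⊆ S then ext u S else 0)]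
    apply Finset.sum_congr rfl
    intro S _
    obtain ⟨h1, h2⟩ := Finset.mem_powersetCard.mp S.2
    by_cases h : T ⊆ S.1 <;> simp [h, ext, S.2, h1, h2]
  have hVd : ∀ {S₀ : Finset ι}, S₀ ∈ V.powersetCard m → (V \ S₀).card = d := by
    intro S₀ hS₀
    obtain ⟨hS₀V, hS₀c⟩ := Finset.mem_powersetCard.mp hS₀
    rw [Finset.card_sdiff_of_subset hS₀V, hV, hS₀c]
    omega
  have hCne : ∀ {i : ℕ}, i ≤ d → (((m - i).choose (d - i) : ℚ)) ≠ 0 := by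
    intro i hi
    exact Nat.cast_ne_zero.mpr (Nat.choose_pos (by omega)).ne'
  -- injectivity of Zl
  have hker : ∀ u, Zl u = 0 → u = 0 := by
    intro u hu
    have hdegd : ∀ D ∈ V.powersetCard d,
        (∑ S ∈ (V.powersetCard m).filter (fun S => D ⊆ S), ext u S) = 0 := by
      intro D hD
      have h0 := congrFun hu ⟨D, hD⟩
      rw [show Zl u ⟨D, hD⟩ = ∑ S ∈ (V.powersetCard m).attach.filter (fun S => D ⊆ S.1), u S
          from rfl, hconv u D] at h0
      exact h0
    have hdegT : ∀ T, T ⊆ V → T.card ≤ d →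
        (∑ S ∈ (V.powersetCard m).filter (fun S => T ⊆ S), ext u S) = 0 := by
      intro T hTV hTd
      have h2 := sum_deg V T m d (ext u) hTV hTd
      rw [Finset.sum_congr rfl (fun D hD => hdegd D (Finset.mem_filter.mp hD).1)] at h2
      rw [Finset.sum_const, smul_zero] at h2
      exact (mul_eq_zero.mp h2.symm).resolve_left (hCne hTd)
    funext S
    have hrec := moebius_recover V S.1 m (ext u) S.2
    rw [Finset.sum_eq_zero (fun B hB => ?_)] at hrec
    · have h2 : ext u S.1 = u S := dif_pos S.2
      rw [h2] at hrec
      exact hrec.symm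
    · have hBsub : B ⊆ V \ S.1 := Finset.mem_powerset.mp hB
      rw [hdegT B (hBsub.trans (Finset.sdiff_subset)) (by
        have := Finset.card_le_card hBsub
        rw [hVd S.2] at this
        exact this), mul_zero]
  have hinj : Function.Injective Zl := by
    intro a b hab
    have h0 : Zl (a - b) = 0 := by rw [map_sub, hab, sub_self]
    have := hker (a - b) h0
    exact sub_eq_zero.mp (by rw [this])
  -- dimension count and surjectivity
  have hdim : Module.finrank ℚ ({S // S ∈ V.powersetCard m} → ℚ)
      = Module.finrank ℚ ({D // D ∈ V.powersetCard d} → ℚ) := by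
    rw [Module.finrank_fintype_fun_eq_card, Module.finrank_fintype_fun_eq_card,
      Fintype.card_coe, Fintype.card_coe, Finset.card_powersetCard,
      Finset.card_powersetCard, hV]
    rw [← Nat.choose_symm (show d ≤ m + d from by omega)]
    congr 1
    omega
  have hsurj := (LinearMap.injective_iff_surjective_of_finrank_eq_finrank hdim).mp hinj
  obtain ⟨ustar, hustar⟩ := hsurj (fun D => (φ D.1 : ℚ))
  -- the integer values t
  let t : Finset ι → ℤ := fun T =>
    (∑ D ∈ (V.powersetCard d).filter (fun D => T ⊆ D), φ D) / ((m - T.card).choose (d - T.card) : ℤ)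
  have ht : ∀ T, T ⊆ V → T.card ≤ d →
      ((m - T.card).choose (d - T.card) : ℤ) * t T
        = ∑ D ∈ (V.powersetCard d).filter (fun D => T ⊆ D), φ D :=
    fun T h1 h2 => Int.mul_ediv_cancel' (hcond T h1 h2)
  have hW : ∀ D ∈ V.powersetCard d,
      (∑ S ∈ (V.powersetCard m).filter (fun S => D ⊆ S), ext ustar S) = (φ D : ℚ) := by
    intro D hD
    have h0 := congrFun hustar ⟨D, hD⟩
    rw [show Zl ustar ⟨D, hD⟩ = ∑ S ∈ (V.powersetCard m).attach.filter (fun S => D ⊆ S.1), ustar S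
        from rfl, hconv ustar D] at h0
    exact h0
  have htdeg : ∀ T, T ⊆ V → T.card ≤ d →
      ((t T : ℚ)) = ∑ S ∈ (V.powersetCard m).filter (fun S => T ⊆ S), ext ustar S := by
    intro T hTV hTd
    have h2 := sum_deg V T m d (ext ustar) hTV hTd
    rw [Finset.sum_congr rfl (fun D hD => hW D (Finset.mem_filter.mp hD).1)] at h2
    have h3 : ((∑ D ∈ (V.powersetCard d).filter (fun D => T ⊆ D), φ D : ℤ) : ℚ)
        = ((m - T.card).choose (d - T.card) : ℚ) *
          ∑ S ∈ (V.powersetCard m).filter (fun S => T ⊆ S), ext ustar S := by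
      rw [← h2]; push_cast; rfl
    rw [← ht T hTV hTd] at h3
    push_cast at h3
    exact mul_left_cancel₀ (hCne hTd) h3
  -- the integral solution
  refine ⟨fun S => ∑ B ∈ (V \ S).powerset, (-1 : ℤ) ^ B.card * t B, ?_⟩
  intro D hD
  have hcast : ∀ S ∈ V.powersetCard m,
      ((∑ B ∈ (V \ S).powerset, (-1 : ℤ) ^ B.card * t B : ℤ) : ℚ) = ext ustar S := by
    intro S hS
    obtain ⟨hSV, _⟩ := Finset.mem_powersetCard.mp hS
    have hrec := moebius_recover V S m (ext ustar) hS
    rw [← hrec]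
    push_cast
    apply Finset.sum_congr rfl
    intro B hB
    have hBsub : B ⊆ V \ S := Finset.mem_powerset.mp hB
    rw [htdeg B (hBsub.trans (Finset.sdiff_subset)) (by
      have := Finset.card_le_card hBsub
      rw [hVd hS] at this
      exact this)]
  have hfin : ((∑ S ∈ (V.powersetCard m).filter (fun S => D ⊆ S),
      (∑ B ∈ (V \ S).powerset, (-1 : ℤ) ^ B.card * t B) : ℤ) : ℚ) = ((φ D : ℤ) : ℚ) := by
    push_cast
    rw [Finset.sum_congr rfl (fun S hS => by
      have := hcast S (Finset.mem_filter.mp hS).1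
      push_cast at this
      exact this)]
    exact hW D hD
  exact_mod_cast hfin

/-- Integer solvability of prescribed `d`-degrees (Graver–Jurkat style). -/
theorem GJmain (N : ℕ) : ∀ (V : Finset ι) (m d : ℕ), V.card = N → d ≤ m → m + d ≤ N →
    ∀ φ : Finset ι → ℤ,
    (∀ T : Finset ι, T ⊆ V → T.card ≤ d →
      (((m - T.card).choose (d - T.card) : ℤ)) ∣
        ∑ D ∈ (V.powersetCard d).filter (fun D => T ⊆ D), φ D) →
    ∃ w : Finset ι → ℤ, ∀ D ∈ V.powersetCard d,
      (∑ S ∈ (V.powersetCard m).filter (fun S => D ⊆ S), w S) = φ D := by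
  induction N using Nat.strong_induction_on with
  | _ N IH =>
  intro V m d hV hdm hmd φ hcond
  rcases eq_or_lt_of_le hmd with hNeq | hNlt
  · exact GJbase V m d hdm (hV.trans hNeq.symm) φ hcond
  rcases Nat.eq_zero_or_pos d with hd0 | hd1
  · -- degree 0 : a single block suffices
    subst hd0
    obtain ⟨S₀, hS₀V, hS₀c⟩ := Finset.exists_subset_card_eq (show m ≤ V.card by omega)
    have hS₀ : S₀ ∈ V.powersetCard m := Finset.mem_powersetCard.mpr ⟨hS₀V, hS₀c⟩
    refine ⟨fun S => if S = S₀ then φ ∅ else 0, ?_⟩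
    intro D hD
    have hDe : D = ∅ := by
      rw [Finset.powersetCard_zero] at hD
      exact Finset.mem_singleton.mp hD
    subst hDe
    rw [Finset.filter_true_of_mem (fun S _ => Finset.empty_subset S)]
    rw [Finset.sum_ite_eq' (V.powersetCard m) S₀ (fun _ => φ ∅), if_pos hS₀]
  -- inductive step : split off an element x
  have hVne : V.Nonempty := Finset.card_pos.mp (by omega)
  obtain ⟨x, hx⟩ := hVne
  have hm1 : 1 ≤ m := le_trans hd1 hdm
  have hV' : (V.erase x).card = N - 1 := by rw [Finset.card_erase_of_mem hx, hV]
  -- step 1 : the link at x, a (d-1)-problem on V.erase x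
  have hlink := IH (N - 1) (by omega) (V.erase x) (m - 1) (d - 1) hV' (by omega) (by omega)
    (fun D' => φ (insert x D'))
  have hlinkcond : ∀ T : Finset ι, T ⊆ V.erase x → T.card ≤ d - 1 →
      ((((m - 1) - T.card).choose ((d - 1) - T.card) : ℤ)) ∣
        ∑ D' ∈ ((V.erase x).powersetCard (d - 1)).filter (fun D' => T ⊆ D'),
          φ (insert x D') := by
    intro T hTV' hTd
    have hxT : x ∉ T := fun h => (Finset.mem_erase.mp (hTV' h)).1 rfl
    rw [← sum_insert_reindex hx hd1 hxT φ]
    have hTins : insert x T ⊆ V := Finset.insert_subset hx (hTV'.trans (Finset.erase_subset x V))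
    have hTinsc : (insert x T).card = T.card + 1 := Finset.card_insert_of_notMem hxT
    have := hcond (insert x T) hTins (by omega)
    rw [hTinsc] at this
    rw [show m - (T.card + 1) = m - 1 - T.card from by omega,
      show d - (T.card + 1) = d - 1 - T.card from by omega] at this
    exact this
  obtain ⟨w₁, hw₁⟩ := hlink hlinkcond
  -- step 2 : the deleted problem on V.erase x
  have hdel := IH (N - 1) (by omega) (V.erase x) m d hV' hdm (by omega)
    (fun D => φ D - ∑ S' ∈ ((V.erase x).powersetCard (m - 1)).filter (fun S' => D ⊆ S'), w₁ S')
  have hdelcond : ∀ T : Finset ι, T ⊆ V.erase x → T.card ≤ d →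
      (((m - T.card).choose (d - T.card) : ℤ)) ∣
        ∑ D ∈ ((V.erase x).powersetCard d).filter (fun D => T ⊆ D),
          (φ D - ∑ S' ∈ ((V.erase x).powersetCard (m - 1)).filter (fun S' => D ⊆ S'), w₁ S') := by
    intro T hTV' hTd
    have hxT : x ∉ T := fun h => (Finset.mem_erase.mp (hTV' h)).1 rfl
    have hTV : T ⊆ V := hTV'.trans (Finset.erase_subset x V)
    rw [Finset.sum_sub_distrib]
    rcases eq_or_lt_of_le hTd with hTdeq | hTdlt
    · -- T.card = d : the binomial coefficient is 1
      rw [← hTdeq, Nat.sub_self, Nat.choose_zero_right]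
      exact one_dvd _
    -- T.card < d
    have hsub2 := sum_deg (V.erase x) T (m - 1) d w₁ hTV' hTd
    -- split the full condition sum
    have hsplit := sum_split_mem (V.powersetCard d) x (fun D => T ⊆ D) φ
    have hxpart : (V.powersetCard d).filter (fun D => T ⊆ D ∧ x ∈ D)
        = (V.powersetCard d).filter (fun D => insert x T ⊆ D) := by
      apply Finset.filter_congr
      intro D _
      simp [Finset.insert_subset_iff, and_comm]
    have hnotxpart : (V.powersetCard d).filter (fun D => T ⊆ D ∧ x ∉ D)
        = ((V.erase x).powersetCard d).filter (fun D => T ⊆ D) :=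
      filter_not_mem_powersetCard V x d _
    rw [hxpart, hnotxpart, sum_insert_reindex hx hd1 hxT φ] at hsplit
    -- the inserted part equals degrees of w₁, summed via sum_deg at level d-1
    have hinspart : ∑ D' ∈ ((V.erase x).powersetCard (d - 1)).filter (fun D' => T ⊆ D'),
        φ (insert x D')
        = (((m - 1) - T.card).choose ((d - 1) - T.card) : ℤ) *
          ∑ S' ∈ ((V.erase x).powersetCard (m - 1)).filter (fun S' => T ⊆ S'), w₁ S' := by
      rw [Finset.sum_congr rfl (fun D' hD' => (hw₁ D' (Finset.mem_filter.mp hD').1).symm)]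
      exact sum_deg (V.erase x) T (m - 1) (d - 1) w₁ hTV' (by omega)
    rw [hinspart] at hsplit
    rw [hsub2]
    -- now compute : sum = (full sum) - C(m-T.card, d-T.card) * deg_T w₁
    have hkey : ∑ D ∈ ((V.erase x).powersetCard d).filter (fun D => T ⊆ D), φ D
        = (∑ D ∈ (V.powersetCard d).filter (fun D => T ⊆ D), φ D)
          - (((m - 1) - T.card).choose ((d - 1) - T.card) : ℤ) *
            ∑ S' ∈ ((V.erase x).powersetCard (m - 1)).filter (fun S' => T ⊆ S'), w₁ S' := by
      omega
    rw [hkey]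
    have hpascal : ((m - T.card).choose (d - T.card) : ℤ)
        = (((m - 1) - T.card).choose ((d - 1) - T.card) : ℤ)
          + (((m - 1) - T.card).choose (d - T.card) : ℤ) := by
      have h1 : m - T.card = (m - 1 - T.card) + 1 := by omega
      have h2 : d - T.card = (d - 1 - T.card) + 1 := by omega
      rw [h1, h2, Nat.choose_succ_succ]
      simp only [Nat.succ_eq_add_one]
      push_cast
      ring
    have hdvd1 := hcond T hTV hTd
    set A := ∑ D ∈ (V.powersetCard d).filter (fun D => T ⊆ D), φ D with hA
    set B := ∑ S' ∈ ((V.erase x).powersetCard (m - 1)).filter (fun S' => T ⊆ S'), w₁ S' with hB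
    have : A - (((m - 1) - T.card).choose ((d - 1) - T.card) : ℤ) * B
        - (((m - 1) - T.card).choose (d - T.card) : ℤ) * B
        = A - ((m - T.card).choose (d - T.card) : ℤ) * B := by
      rw [hpascal]; ring
    rw [this]
    exact dvd_sub hdvd1 (Dvd.intro B rfl)
  obtain ⟨w₀, hw₀⟩ := hdel hdelcond
  -- assemble
  refine ⟨fun S => if x ∈ S then w₁ (S.erase x) else w₀ S, ?_⟩
  intro D hD
  obtain ⟨hDV, hDc⟩ := Finset.mem_powersetCard.mp hD
  rw [sum_split_mem (V.powersetCard m) x (fun S => D ⊆ S) _]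
  by_cases hxD : x ∈ D
  · -- blocks through x only
    have hpart2 : ∑ S ∈ (V.powersetCard m).filter (fun S => D ⊆ S ∧ x ∉ S),
        (if x ∈ S then w₁ (S.erase x) else w₀ S) = 0 := by
      apply Finset.sum_eq_zero
      intro S hS
      obtain ⟨_, hDS, hxS⟩ := Finset.mem_filter.mp hS
      exact absurd (hDS hxD) hxS
    have hcondeq : (V.powersetCard m).filter (fun S => D ⊆ S ∧ x ∈ S)
        = (V.powersetCard m).filter (fun S => insert x (D.erase x) ⊆ S) := by
      apply Finset.filter_congr
      intro S _
      rw [Finset.insert_erase hxD]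
      constructor
      · rintro ⟨h1, _⟩; exact h1
      · intro h1; exact ⟨h1, h1 hxD⟩
    have hxDe : x ∉ D.erase x := Finset.notMem_erase x D
    rw [hpart2, add_zero, hcondeq,
      sum_insert_reindex hx hm1 hxDe (fun S => if x ∈ S then w₁ (S.erase x) else w₀ S)]
    have hterm : ∀ S' ∈ ((V.erase x).powersetCard (m - 1)).filter (fun S' => D.erase x ⊆ S'),
        (if x ∈ insert x S' then w₁ ((insert x S').erase x) else w₀ (insert x S')) = w₁ S' := by
      intro S' hS'
      obtain ⟨hS'mem, _⟩ := Finset.mem_filter.mp hS'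
      obtain ⟨hS'V, _⟩ := Finset.mem_powersetCard.mp hS'mem
      have hxS' : x ∉ S' := fun h => (Finset.mem_erase.mp (hS'V h)).1 rfl
      rw [if_pos (Finset.mem_insert_self x S'), Finset.erase_insert hxS']
    rw [Finset.sum_congr rfl hterm]
    have hDe : D.erase x ∈ (V.erase x).powersetCard (d - 1) := by
      refine Finset.mem_powersetCard.mpr ⟨Finset.erase_subset_erase x hDV, ?_⟩
      rw [Finset.card_erase_of_mem hxD, hDc]
    rw [hw₁ (D.erase x) hDe, Finset.insert_erase hxD]
  · -- blocks through x and blocks avoiding x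
    have hxDe : x ∉ D := hxD
    have hcondeq : (V.powersetCard m).filter (fun S => D ⊆ S ∧ x ∈ S)
        = (V.powersetCard m).filter (fun S => insert x D ⊆ S) := by
      apply Finset.filter_congr
      intro S _
      simp [Finset.insert_subset_iff, and_comm]
    rw [hcondeq, sum_insert_reindex hx hm1 hxDe (fun S => if x ∈ S then w₁ (S.erase x) else w₀ S)]
    have hterm : ∀ S' ∈ ((V.erase x).powersetCard (m - 1)).filter (fun S' => D ⊆ S'),
        (if x ∈ insert x S' then w₁ ((insert x S').erase x) else w₀ (insert x S')) = w₁ S' := by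
      intro S' hS'
      obtain ⟨hS'mem, _⟩ := Finset.mem_filter.mp hS'
      obtain ⟨hS'V, _⟩ := Finset.mem_powersetCard.mp hS'mem
      have hxS' : x ∉ S' := fun h => (Finset.mem_erase.mp (hS'V h)).1 rfl
      rw [if_pos (Finset.mem_insert_self x S'), Finset.erase_insert hxS']
    rw [Finset.sum_congr rfl hterm]
    have hnotxpart : (V.powersetCard m).filter (fun S => D ⊆ S ∧ x ∉ S)
        = ((V.erase x).powersetCard m).filter (fun S => D ⊆ S) :=
      filter_not_mem_powersetCard V x m _
    rw [hnotxpart]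
    have hterm2 : ∀ S ∈ ((V.erase x).powersetCard m).filter (fun S => D ⊆ S),
        (if x ∈ S then w₁ (S.erase x) else w₀ S) = w₀ S := by
      intro S hS
      obtain ⟨hSmem, _⟩ := Finset.mem_filter.mp hS
      obtain ⟨hSV, _⟩ := Finset.mem_powersetCard.mp hSmem
      have hxS : x ∉ S := fun h => (Finset.mem_erase.mp (hSV h)).1 rfl
      rw [if_neg hxS]
    rw [Finset.sum_congr rfl hterm2]
    have hDmem : D ∈ (V.erase x).powersetCard d := by
      refine Finset.mem_powersetCard.mpr ⟨?_, hDc⟩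
      rw [Finset.subset_erase]
      exact ⟨hDV, hxDe⟩
    rw [hw₀ D hDmem]
    ring

/-- `r`-th finite difference of `x ↦ C(x, r)` equals 1. -/
lemma diff_identity : ∀ r x : ℕ, r ≤ x →
    ∑ i ∈ Finset.range (r + 1), (-1 : ℤ) ^ i * (r.choose i) * ((x - i).choose r) = 1 := by
  intro r
  induction r with
  | zero => intro x _; simp
  | succ r ih =>
    intro x hx
    have hT : ∑ i ∈ Finset.range (r + 1), (-1 : ℤ) ^ i * (r.choose (i + 1)) * ((x - 1 - i).choose (r + 1))
        = ((x.choose (r + 1)) : ℤ)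
          - ∑ i ∈ Finset.range (r + 1), (-1 : ℤ) ^ i * (r.choose i) * ((x - i).choose (r + 1)) := by
      rw [Finset.sum_range_succ, Nat.choose_succ_self]
      rw [Finset.sum_range_succ' (fun i => (-1 : ℤ) ^ i * (r.choose i) * ((x - i).choose (r + 1))) r]
      push_cast
      have : ∀ i ∈ Finset.range r,
          (-1 : ℤ) ^ (i + 1) * (r.choose (i + 1)) * ((x - (i + 1)).choose (r + 1))
          = -((-1 : ℤ) ^ i * (r.choose (i + 1)) * ((x - 1 - i).choose (r + 1))) := by
        intro i _
        rw [show x - (i + 1) = x - 1 - i from by omega]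
        ring
      rw [Finset.sum_congr rfl this, Finset.sum_neg_distrib]
      simp
    have hstep : ∑ i ∈ Finset.range (r + 2), (-1 : ℤ) ^ i * ((r + 1).choose i) * ((x - i).choose (r + 1))
        = ∑ i ∈ Finset.range (r + 1), (-1 : ℤ) ^ i * (r.choose i) *
            (((x - i).choose (r + 1) : ℤ) - ((x - 1 - i).choose (r + 1) : ℤ)) := by
      rw [Finset.sum_range_succ'
        (fun i => (-1 : ℤ) ^ i * ((r + 1).choose i) * ((x - i).choose (r + 1))) (r + 1)]
      have hsummand : ∀ i ∈ Finset.range (r + 1),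
          (-1 : ℤ) ^ (i + 1) * ((r + 1).choose (i + 1)) * ((x - (i + 1)).choose (r + 1))
          = -((-1 : ℤ) ^ i * (r.choose i) * ((x - 1 - i).choose (r + 1)))
            - ((-1 : ℤ) ^ i * (r.choose (i + 1)) * ((x - 1 - i).choose (r + 1))) := by
        intro i _
        rw [show x - (i + 1) = x - 1 - i from by omega, Nat.choose_succ_succ]
        push_cast
        ring
      rw [Finset.sum_congr rfl hsummand]
      rw [Finset.sum_sub_distrib, Finset.sum_neg_distrib]
      rw [hT]
      have hsplit : ∀ i ∈ Finset.range (r + 1),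
          (-1 : ℤ) ^ i * (r.choose i) *
            (((x - i).choose (r + 1) : ℤ) - ((x - 1 - i).choose (r + 1) : ℤ))
          = (-1 : ℤ) ^ i * (r.choose i) * ((x - i).choose (r + 1))
            - (-1 : ℤ) ^ i * (r.choose i) * ((x - 1 - i).choose (r + 1)) := by
        intro i _; ring
      rw [Finset.sum_congr rfl hsplit, Finset.sum_sub_distrib]
      simp
      ring
    have hpascal : ∀ i ∈ Finset.range (r + 1),
        (-1 : ℤ) ^ i * (r.choose i) *
          (((x - i).choose (r + 1) : ℤ) - ((x - 1 - i).choose (r + 1) : ℤ))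
        = (-1 : ℤ) ^ i * (r.choose i) * (((x - 1) - i).choose r : ℤ) := by
      intro i hi
      have hi' : i < r + 1 := Finset.mem_range.mp hi
      have h1 : x - i = (x - 1 - i) + 1 := by omega
      rw [h1, Nat.choose_succ_succ]
      push_cast
      have h2 : x - 1 - i = (x - 1) - i := by omega
      rw [h2]
      ring
    rw [hstep, Finset.sum_congr rfl hpascal, ih (x - 1) (by omega)]

/-- Divisibility condition: if `Y` is a family of `m`-subsets of `[n]` whose characteristic
function has degree at most `d`, then `gcd(C(n,m), C(n-1,m-1), …, C(n-d,m-d))` divides `|Y|`. -/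
theorem stmt_16 (n m d : ℕ) (hd : d ≤ m) (hm : m ≤ n)
    (Y : Finset (Finset (Fin n))) (hYm : ∀ S ∈ Y, S.card = m)
    (c : Finset (Fin n) → ℝ)
    (hdeg : ∀ S : Finset (Fin n), S.card = m →
      (if S ∈ Y then (1 : ℝ) else 0) =
        ∑ D ∈ Finset.powersetCard d Finset.univ, c D * (if D ⊆ S then 1 else 0)) :
    ((Finset.range (d + 1)).gcd fun i => (n - i).choose (m - i)) ∣ Y.card := by
  classical
  set g := ((Finset.range (d + 1)).gcd fun i => (n - i).choose (m - i)) with hgdef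
  have hgdvd : ∀ i, i ≤ d → g ∣ (n - i).choose (m - i) := by
    intro i hi
    exact Finset.gcd_dvd (Finset.mem_range.mpr (by omega))
  have hgpos : 0 < g := by
    rcases Nat.eq_zero_or_pos g with h0 | h
    · exfalso
      have hdvd := hgdvd 0 (Nat.zero_le d)
      rw [h0] at hdvd
      have h00 := Nat.eq_zero_of_zero_dvd hdvd
      simp only [Nat.sub_zero] at h00
      exact absurd h00 (Nat.choose_pos hm).ne'
    · exact h
  by_cases hcase : m + d ≤ n
  · -- main case : build an integral design of index C(n-d, m-d)/g
    have hgC : g ∣ (n - d).choose (m - d) := hgdvd d (le_refl d)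
    set lam := (n - d).choose (m - d) / g with hlam
    have hglam : g * lam = (n - d).choose (m - d) := Nat.mul_div_cancel' hgC
    have huniv : (Finset.univ : Finset (Fin n)).card = n := by
      rw [Finset.card_univ, Fintype.card_fin]
    -- the GJ conditions for the constant function lam
    have hconds : ∀ T : Finset (Fin n), T ⊆ Finset.univ → T.card ≤ d →
        (((m - T.card).choose (d - T.card) : ℤ)) ∣
          ∑ D ∈ ((Finset.univ : Finset (Fin n)).powersetCard d).filter (fun D => T ⊆ D),
            (lam : ℤ) := by
      intro T hTV hTd
      rw [Finset.sum_const, card_supersets hTV hTd, huniv, nsmul_eq_mul]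
      -- need : C(m - i, d - i) ∣ C(n - i, d - i) * lam  in ℤ
      set i := T.card with hi
      obtain ⟨q, hq⟩ := hgdvd i (by omega)
      have hnat : ((n - i).choose (d - i)) * lam = ((m - i).choose (d - i)) * q := by
        have hmul : g * (((n - i).choose (d - i)) * lam)
            = g * (((m - i).choose (d - i)) * q) := by
          calc g * (((n - i).choose (d - i)) * lam)
              = ((n - i).choose (d - i)) * (g * lam) := by ring
            _ = ((n - i).choose (d - i)) * ((n - d).choose (m - d)) := by rw [hglam]
            _ = ((n - i).choose (m - i)) * ((m - i).choose (d - i)) := by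
                have hchain := Nat.choose_mul (n := n - i)
                  (show d - i ≤ m - i by omega)
                rw [show (n - i) - (d - i) = n - d from by omega,
                  show (m - i) - (d - i) = m - d from by omega] at hchain
                rw [← hchain]
            _ = g * (((m - i).choose (d - i)) * q) := by rw [hq]; ring
        exact Nat.eq_of_mul_eq_mul_left hgpos hmul
      refine ⟨q, ?_⟩
      exact_mod_cast hnat
    obtain ⟨w, hw⟩ := GJmain n (Finset.univ : Finset (Fin n)) m d huniv hd hcase
      (fun _ => (lam : ℤ)) hconds
    -- now compute over ℝ
    set PC := (Finset.univ : Finset (Fin n)).powersetCard m with hPC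
    have hYPC : ∀ S ∈ Y, S ∈ PC :=
      fun S hS => Finset.mem_powersetCard.mpr ⟨Finset.subset_univ S, hYm S hS⟩
    have hfilterY : PC.filter (fun S => S ∈ Y) = Y := by
      ext S
      simp only [Finset.mem_filter]
      exact ⟨fun h => h.2, fun h => ⟨hYPC S h, h⟩⟩
    have hcard : (Y.card : ℝ) = ∑ S ∈ PC, (if S ∈ Y then (1 : ℝ) else 0) := by
      rw [Finset.sum_boole, hfilterY]
    have hcount : ∀ D ∈ (Finset.univ : Finset (Fin n)).powersetCard d,
        (∑ S ∈ PC, (if D ⊆ S then (1 : ℝ) else 0)) = ((n - d).choose (m - d) : ℝ) := by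
      intro D hD
      obtain ⟨hDV, hDc⟩ := Finset.mem_powersetCard.mp hD
      rw [Finset.sum_boole, card_supersets hDV (hDc.le.trans hd), huniv, hDc]
    have hswap1 : ∑ S ∈ PC, (if S ∈ Y then (1 : ℝ) else 0)
        = (∑ D ∈ (Finset.univ : Finset (Fin n)).powersetCard d, c D) *
          ((n - d).choose (m - d) : ℝ) := by
      rw [Finset.sum_congr rfl (fun S hS => hdeg S (Finset.mem_powersetCard.mp hS).2)]
      rw [Finset.sum_comm]
      rw [Finset.sum_congr rfl (fun D hD => by
        rw [← Finset.mul_sum, hcount D hD])]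
      rw [← Finset.sum_mul]
    have hdegw : ∀ D ∈ (Finset.univ : Finset (Fin n)).powersetCard d,
        (∑ S ∈ PC, (if D ⊆ S then (1 : ℝ) else 0) * (w S : ℝ)) = (lam : ℝ) := by
      intro D hD
      have h1 := hw D hD
      have h2 : ((∑ S ∈ PC.filter (fun S => D ⊆ S), w S : ℤ) : ℝ) = ((lam : ℤ) : ℝ) := by
        exact_mod_cast congrArg (fun z : ℤ => (z : ℝ)) h1
      push_cast at h2
      rw [← h2, Finset.sum_filter]
      apply Finset.sum_congr rfl
      intro S _
      split <;> simp
    have hswap2 : ∑ S ∈ PC, (if S ∈ Y then (1 : ℝ) else 0) * (w S : ℝ)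
        = (∑ D ∈ (Finset.univ : Finset (Fin n)).powersetCard d, c D) * (lam : ℝ) := by
      rw [Finset.sum_congr rfl (fun S hS => by
        rw [hdeg S (Finset.mem_powersetCard.mp hS).2, Finset.sum_mul])]
      rw [Finset.sum_comm]
      rw [Finset.sum_congr rfl (fun D hD => by
        have : ∀ S ∈ PC, c D * (if D ⊆ S then (1:ℝ) else 0) * (w S : ℝ)
            = c D * ((if D ⊆ S then (1:ℝ) else 0) * (w S : ℝ)) := by
          intro S _; ring
        rw [Finset.sum_congr rfl this, ← Finset.mul_sum, hdegw D hD])]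
      rw [← Finset.sum_mul]
    set z := ∑ S ∈ Y, w S with hz
    have hzr : ((z : ℤ) : ℝ) = ∑ S ∈ PC, (if S ∈ Y then (1 : ℝ) else 0) * (w S : ℝ) := by
      have hsummand : ∀ S ∈ PC, (if S ∈ Y then (1 : ℝ) else 0) * (w S : ℝ)
          = (if S ∈ Y then ((w S : ℝ)) else 0) := by
        intro S _; split <;> simp
      rw [Finset.sum_congr rfl hsummand, ← Finset.sum_filter, hfilterY, hz]
      push_cast
      rfl
    have hreal : (g : ℝ) * (z : ℝ) = (Y.card : ℝ) := by
      rw [hzr, hswap2, hcard, hswap1]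
      have : (g : ℝ) * ((∑ D ∈ (Finset.univ : Finset (Fin n)).powersetCard d, c D) * (lam : ℝ))
          = (∑ D ∈ (Finset.univ : Finset (Fin n)).powersetCard d, c D) * ((g * lam : ℕ) : ℝ) := by
        push_cast
        ring
      rw [this, hglam]
    have hint : (g : ℤ) * z = (Y.card : ℤ) := by exact_mod_cast hreal
    have : (g : ℤ) ∣ (Y.card : ℤ) := ⟨z, hint.symm⟩
    exact_mod_cast this
  · -- degenerate case : the gcd is 1
    push_neg at hcase
    set r := n - m with hr
    have hrd : r < d := by omega
    have hterm : ∀ i, i ≤ r → (n - i).choose r = (n - i).choose (m - i) := by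
      intro i hi
      rw [show r = (n - i) - (m - i) from by omega, Nat.choose_symm (by omega)]
    have hdvd1 : (g : ℤ) ∣ 1 := by
      rw [← diff_identity r n (by omega)]
      apply Finset.dvd_sum
      intro i hi
      have hi' : i ≤ r := by
        have := Finset.mem_range.mp hi
        omega
      have : (g : ℤ) ∣ ((n - i).choose r : ℤ) := by
        rw [hterm i hi']
        exact_mod_cast Int.natCast_dvd_natCast.mpr (hgdvd i (by omega))
      exact Dvd.dvd.mul_left this _
    have hg1 : g = 1 := by
      have : g ∣ 1 := by exact_mod_cast hdvd1
      exact Nat.dvd_one.mp this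
    rw [hg1]
    exact one_dvd _
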